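/- Let D = (n, g_0; (c_1,n_1), ..., (c_ℓ,n_ℓ)) be a root realizing data set: n_{ℓ-1} = n_ℓ = n and c_{ℓ-1} + c_ℓ ≡ c_{ℓ-1}·c_ℓ (mod n), with ℓ ≥ 4. Then D can be decomposed as an (ℓ-1, 3)-compatible pair (D_1, D_2) where D_1 = (n, g_0; (c_1,n_1), ..., (c_{ℓ-2},n_{ℓ-2}), (c_{ℓ-1}c_ℓ, n)) and D_2 = (n, 0; (c, n), (c_{ℓ-1}, n), (c_ℓ, n)) with c ≡ -c_{ℓ-1}c_ℓ (mod n); in particular, both D_1 and D_2 are valid data sets of degree n (with D_2 having non-negative genus), and D_2 is itself a root realizing data set. -/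

import Mathlib

/-- A data set of degree `n` with orbifold genus `g0` and cone-point data `L`:
each cone order divides `n`, each `c_i` is coprime to `n_i`, and
`Σ_j (n/n_j)·c_j ≡ 0 (mod n)`. -/
def IsDataSet (n _g0 : ℕ) (L : List (ℤ × ℕ)) : Prop :=
  1 ≤ n ∧ (∀ p ∈ L, 0 < p.2 ∧ p.2 ∣ n ∧ Int.gcd p.1 p.2 = 1) ∧
    (n : ℤ) ∣ (L.map (fun p => ((n / p.2 : ℕ) : ℤ) * p.1)).sum

/-- The Riemann–Hurwitz equation `(2-2g)/n = 2-2g0 + Σ_j (1/n_j - 1)`, in its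
integer form `2 - 2g = n(2 - 2g0) - Σ_j (n - n/n_j)`. -/
def GenusEq (n g0 : ℕ) (L : List (ℤ × ℕ)) (g : ℤ) : Prop :=
  2 - 2 * g = (n : ℤ) * (2 - 2 * (g0 : ℤ)) -
    (L.map (fun p => (n : ℤ) - ((n / p.2 : ℕ) : ℤ))).sum

/-- A root realizing data set `D = (n, g_0; (c_1,n_1),…,(c_ℓ,n_ℓ))`
(with `n_{ℓ-1} = n_ℓ = n`, `c_{ℓ-1} + c_ℓ ≡ c_{ℓ-1}c_ℓ (mod n)`, `ℓ ≥ 4`) decomposes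
as a compatible pair `(D_1, D_2)` with
`D_1 = (n, g_0; (c_1,n_1),…,(c_{ℓ-2},n_{ℓ-2}), (c_{ℓ-1}c_ℓ, n))` and
`D_2 = (n, 0; (c,n),(c_{ℓ-1},n),(c_ℓ,n))` where `c ≡ -c_{ℓ-1}c_ℓ (mod n)`:
both are valid data sets, the compatibility `c + c_{ℓ-1}c_ℓ ≡ 0 (mod n)` holds,
`D_2` has non-negative genus, and `D_2` is itself root realizing. -/
theorem stmt10 (n g0 : ℕ) (cl1 cl c : ℤ) (A : List (ℤ × ℕ))
    (hD : IsDataSet n g0 (A ++ [(cl1, n), (cl, n)]))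
    (hlen : 2 ≤ A.length)
    (hroot : (n : ℤ) ∣ cl1 + cl - cl1 * cl)
    (hc : (n : ℤ) ∣ c + cl1 * cl) :
    IsDataSet n g0 (A ++ [(cl1 * cl, n)]) ∧
    IsDataSet n 0 [(c, n), (cl1, n), (cl, n)] ∧
    (n : ℤ) ∣ cl1 * cl + c ∧
    (∃ g2 : ℕ, GenusEq n 0 [(c, n), (cl1, n), (cl, n)] (g2 : ℤ)) ∧
    (n : ℤ) ∣ cl1 + cl - cl1 * cl := by
  obtain ⟨hn, hmem, hsum⟩ := hD
  have hnn : n / n = 1 := Nat.div_self hn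
  have hcl1 : Int.gcd cl1 n = 1 := (hmem (cl1, n) (by simp)).2.2
  have hcl : Int.gcd cl n = 1 := (hmem (cl, n) (by simp)).2.2
  have hcop1 : IsCoprime cl1 (n : ℤ) := Int.isCoprime_iff_gcd_eq_one.mpr hcl1
  have hcop2 : IsCoprime cl (n : ℤ) := Int.isCoprime_iff_gcd_eq_one.mpr hcl
  have hcopm : IsCoprime (cl1 * cl) (n : ℤ) := hcop1.mul_left hcop2
  obtain ⟨k, hk⟩ := hc
  have hcopc : IsCoprime c (n : ℤ) := by
    have hce : c = -(cl1 * cl) + (n : ℤ) * k := by linarith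
    rw [hce]
    exact hcopm.neg_left.add_mul_left_left k
  have hsum' : (n : ℤ) ∣
      (A.map (fun p => ((n / p.2 : ℕ) : ℤ) * p.1)).sum + cl1 + cl := by
    have := hsum
    simp only [List.map_append, List.sum_append, List.map_cons, List.map_nil,
      List.sum_cons, List.sum_nil, hnn, Nat.cast_one, one_mul, add_zero] at this
    convert this using 1
    ring
  -- parity: n is odd
  have hn2 : ¬ (2 ∣ n) := by
    intro h2
    have h2z : (2 : ℤ) ∣ (n : ℤ) := by exact_mod_cast h2
    have hd1 : ¬ (2 : ℤ) ∣ cl1 := by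
      intro hd
      have h := Int.dvd_gcd hd h2z
      rw [hcl1] at h
      norm_num at h
    have hd2 : ¬ (2 : ℤ) ∣ cl := by
      intro hd
      have h := Int.dvd_gcd hd h2z
      rw [hcl] at h
      norm_num at h
    have ho1 : Odd cl1 := Int.odd_iff.mpr (by omega)
    have ho2 : Odd cl := Int.odd_iff.mpr (by omega)
    obtain ⟨m, hm⟩ := Int.odd_mul.mpr ⟨ho1, ho2⟩
    obtain ⟨a, ha⟩ := ho1
    obtain ⟨b, hb⟩ := ho2
    have h2r : (2 : ℤ) ∣ cl1 + cl - cl1 * cl := h2z.trans hroot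
    omega
  obtain ⟨m, hm⟩ : ∃ m, n = 2 * m + 1 := ⟨n / 2, by omega⟩
  refine ⟨⟨hn, ?_, ?_⟩, ⟨hn, ?_, ?_⟩, ?_, ⟨m, ?_⟩, hroot⟩
  · intro p hp
    rcases List.mem_append.mp hp with h | h
    · exact hmem p (List.mem_append.mpr (Or.inl h))
    · simp only [List.mem_singleton] at h
      subst h
      exact ⟨hn, dvd_rfl, Int.isCoprime_iff_gcd_eq_one.mp hcopm⟩
  · simp only [List.map_append, List.sum_append, List.map_cons, List.map_nil,
      List.sum_cons, List.sum_nil, hnn, Nat.cast_one, one_mul, add_zero]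
    have := dvd_sub hsum' hroot
    convert this using 1
    · rfl
    ring
  · intro p hp
    simp only [List.mem_cons, List.not_mem_nil, or_false] at hp
    rcases hp with h | h | h <;> subst h
    · exact ⟨hn, dvd_rfl, Int.isCoprime_iff_gcd_eq_one.mp hcopc⟩
    · exact ⟨hn, dvd_rfl, hcl1⟩
    · exact ⟨hn, dvd_rfl, hcl⟩
  · simp only [List.map_cons, List.map_nil, List.sum_cons, List.sum_nil,
      hnn, Nat.cast_one, one_mul, add_zero]
    have := dvd_add ⟨k, hk⟩ hroot
    convert this using 1
    · rfl
    ring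
  · exact ⟨k, by linarith⟩
  · simp only [GenusEq, List.map_cons, List.map_nil, List.sum_cons, List.sum_nil,
      hnn, Nat.cast_one, add_zero]
    push_cast
    omega
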